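/- The Jacobian matrix H_W(ρ) of the vector field W = (W⁽¹⁾, W⁽²⁾) is positive definite for every ρ in the open triangle T, and consequently (a - b)·(W(a) - W(b)) ≥ 0 for all a, b ∈ T. -/

import Mathlib

open Real

/-- First component of the vector field . -/
noncomputable def W1 (ρ₁ ρ₂ : ℝ) : ℝ :=
  -(1 / (2 * π)) * Real.cot (π * (ρ₁ + ρ₂)) * (Real.sin (π * ρ₂)) ^ 2
    - ρ₂ / 4 + (1 / (4 * π)) * Real.sin (2 * π * ρ₂)

/-- Second component of the vector field . -/
noncomputable def W2 (ρ₁ ρ₂ : ℝ) : ℝ := W1 ρ₂ ρ₁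

/-- Directional-derivative expression for  along a curve. -/
noncomputable def D1 (a b u' v' : ℝ) : ℝ :=
  (u' + v') * Real.sin (π * b) ^ 2 / (2 * Real.sin (π * (a + b)) ^ 2)
  - (Real.cos (π * (a + b)) / Real.sin (π * (a + b))) * Real.sin (π * b) * Real.cos (π * b) * v'
  - v' / 4 + v' / 2 * Real.cos (2 * (π * b))

lemma hasDerivAt_W1_comp (u v : ℝ → ℝ) (u' v' t : ℝ)
    (hu : HasDerivAt u u' t) (hv : HasDerivAt v v' t)
    (hs : Real.sin (π * (u t + v t)) ≠ 0) :
    HasDerivAt (fun s => W1 (u s) (v s)) (D1 (u t) (v t) u' v') t := by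
  have hπ : (0:ℝ) < π := Real.pi_pos
  have hP : HasDerivAt (fun s => π * (u s + v s)) (π * (u' + v')) t := (hu.add hv).const_mul π
  have hQ : HasDerivAt (fun s => π * v s) (π * v') t := hv.const_mul π
  have hQ2 : HasDerivAt (fun s => 2 * π * v s) (2 * π * v') t := by
    have := hv.const_mul (2 * π)
    simpa [mul_assoc] using this
  have hcot : HasDerivAt (fun s => Real.cos (π * (u s + v s)) / Real.sin (π * (u s + v s)))
      ((-Real.sin (π * (u t + v t)) * (π * (u' + v')) * Real.sin (π * (u t + v t))
        - Real.cos (π * (u t + v t)) * (Real.cos (π * (u t + v t)) * (π * (u' + v'))))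
        / Real.sin (π * (u t + v t)) ^ 2) t := (hP.cos).div (hP.sin) hs
  have h1 : HasDerivAt (fun s => -(1 / (2 * π)) *
      (Real.cos (π * (u s + v s)) / Real.sin (π * (u s + v s))) * (Real.sin (π * v s)) ^ 2)
      ((-(1 / (2 * π)) * ((-Real.sin (π * (u t + v t)) * (π * (u' + v')) * Real.sin (π * (u t + v t))
        - Real.cos (π * (u t + v t)) * (Real.cos (π * (u t + v t)) * (π * (u' + v'))))
        / Real.sin (π * (u t + v t)) ^ 2)) * (Real.sin (π * v t)) ^ 2
       + (-(1 / (2 * π)) * (Real.cos (π * (u t + v t)) / Real.sin (π * (u t + v t)))) *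
          (2 * Real.sin (π * v t) ^ 1 * (Real.cos (π * v t) * (π * v')))) t := by
    exact (hcot.const_mul (-(1 / (2 * π)))).mul ((hQ.sin).pow 2)
  have h2 : HasDerivAt (fun s => v s / 4) (v' / 4) t := hv.div_const 4
  have h3 : HasDerivAt (fun s => (1 / (4 * π)) * Real.sin (2 * π * v s))
      ((1 / (4 * π)) * (Real.cos (2 * π * v t) * (2 * π * v'))) t := (hQ2.sin).const_mul _
  have hall := (h1.sub h2).add h3
  have hfun : (fun s => W1 (u s) (v s)) = fun s =>
      -(1 / (2 * π)) * (Real.cos (π * (u s + v s)) / Real.sin (π * (u s + v s))) *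
        (Real.sin (π * v s)) ^ 2 - v s / 4 + (1 / (4 * π)) * Real.sin (2 * π * v s) := by
    funext s; rw [W1, Real.cot_eq_cos_div_sin]
  rw [hfun]
  refine hall.congr_deriv ?_
  symm
  rw [D1]
  have hpy := Real.sin_sq_add_cos_sq (π * (u t + v t))
  have h2b : Real.cos (2 * π * v t) = Real.cos (2 * (π * v t)) := by ring_nf
  rw [h2b]
  field_simp
  linear_combination (-4 * Real.sin (π * v t)^2 * (u'+v')) * hpy

lemma quad_pos (p q c v₁ v₂ : ℝ) (hp : 0 < p) (hq : 0 < q)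
    (h1 : -(2 * p * q) < c) (h2 : c < 2 * p * q) (hv : v₁ ≠ 0 ∨ v₂ ≠ 0) :
    0 < q ^ 2 * v₁ ^ 2 + c * (v₁ * v₂) + p ^ 2 * v₂ ^ 2 := by
  rcases lt_trichotomy (v₁ * v₂) 0 with h | h | h
  · nlinarith [sq_nonneg (q * v₁ + p * v₂)]
  · rcases mul_eq_zero.1 h with h0 | h0
    · subst h0
      have h' : v₂ ≠ 0 := by rcases hv with h' | h' <;> simp_all
      have h2p : 0 < v₂ ^ 2 := by rcases h'.lt_or_gt with hh | hh <;> nlinarith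
      nlinarith [mul_pos (mul_pos hp hp) h2p]
    · subst h0
      have h' : v₁ ≠ 0 := by rcases hv with h' | h' <;> simp_all
      have h2p : 0 < v₁ ^ 2 := by rcases h'.lt_or_gt with hh | hh <;> nlinarith
      nlinarith [mul_pos (mul_pos hq hq) h2p]
  · nlinarith [sq_nonneg (q * v₁ - p * v₂)]

lemma hBC_lemma (sx cx sy cy : ℝ) (hx : sx ^ 2 + cx ^ 2 = 1) (hy : sy ^ 2 + cy ^ 2 = 1)
    (hσ0 : sx * cy + cx * sy ≠ 0) :
    sy ^ 2 / (2 * (sx * cy + cx * sy) ^ 2)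
      - ((cx * cy - sx * sy) / (sx * cy + cx * sy)) * sy * cy - 1 / 4 + (2 * cy ^ 2 - 1) / 2
      + (sx ^ 2 / (2 * (sx * cy + cx * sy) ^ 2)
      - ((cx * cy - sx * sy) / (sx * cy + cx * sy)) * sx * cx - 1 / 4 + (2 * cx ^ 2 - 1) / 2)
      = (sx ^ 2 + sy ^ 2 - (sx * cy + cx * sy) ^ 2) / (2 * (sx * cy + cx * sy) ^ 2) := by
  have key : (cx * cy - sx * sy) * (sy * cy + sx * cx) = (sx * cy + cx * sy) * (cx ^ 2 + cy ^ 2 - 1) := by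
    linear_combination (-cx * sy) * hx + (-sx * cy) * hy
  have k2 : (cx * cy - sx * sy) / (sx * cy + cx * sy) * (sy * cy + sx * cx) = cx ^ 2 + cy ^ 2 - 1 := by
    rw [div_mul_eq_mul_div, key, mul_div_cancel_left₀ _ hσ0]
  have k3 : (sx * cy + cx * sy) ^ 2 / (2 * (sx * cy + cx * sy) ^ 2) = 1 / 2 := by
    rw [div_eq_iff (mul_ne_zero two_ne_zero (pow_ne_zero 2 hσ0))]; ring
  calc _ = (sx ^ 2 + sy ^ 2) / (2 * (sx * cy + cx * sy) ^ 2)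
        - (cx * cy - sx * sy) / (sx * cy + cx * sy) * (sy * cy + sx * cx) + (cx ^ 2 + cy ^ 2) - 3 / 2 := by ring
    _ = (sx ^ 2 + sy ^ 2) / (2 * (sx * cy + cx * sy) ^ 2) - 1 / 2 := by rw [k2]; ring
    _ = _ := by rw [sub_div, k3]

lemma core (sx cx sy cy v₁ v₂ : ℝ) (hx : sx ^ 2 + cx ^ 2 = 1) (hy : sy ^ 2 + cy ^ 2 = 1)
    (hsx : 0 < sx) (hsy : 0 < sy) (hσ : 0 < sx * cy + cx * sy) (hv : v₁ ≠ 0 ∨ v₂ ≠ 0) :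
    0 < v₁ * ((v₁ + v₂) * sy ^ 2 / (2 * (sx * cy + cx * sy) ^ 2)
          - ((cx * cy - sx * sy) / (sx * cy + cx * sy)) * sy * cy * v₂
          - v₂ / 4 + v₂ / 2 * (2 * cy ^ 2 - 1))
      + v₂ * ((v₂ + v₁) * sx ^ 2 / (2 * (sx * cy + cx * sy) ^ 2)
          - ((cx * cy - sx * sy) / (sx * cy + cx * sy)) * sx * cx * v₁
          - v₁ / 4 + v₁ / 2 * (2 * cx ^ 2 - 1)) := by
  have hσ0 : sx * cy + cx * sy ≠ 0 := ne_of_gt hσ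
  have hpyth : (cx * cy - sx * sy) ^ 2 + (sx * cy + cx * sy) ^ 2 = 1 := by
    linear_combination (sy ^ 2 + cy ^ 2) * hx + hy
  have hc1 : 0 < 1 + (cx * cy - sx * sy) := by nlinarith
  have hc2 : 0 < 1 - (cx * cy - sx * sy) := by nlinarith
  have hid1 : 2 * sx * sy - (sx ^ 2 + sy ^ 2 - (sx * cy + cx * sy) ^ 2)
      = 2 * sx * sy * (1 + (cx * cy - sx * sy)) := by
    linear_combination (sy^2) * hx + (sx^2) * hy
  have hid2 : (sx ^ 2 + sy ^ 2 - (sx * cy + cx * sy) ^ 2) + 2 * sx * sy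
      = 2 * sx * sy * (1 - (cx * cy - sx * sy)) := by
    linear_combination (-sy^2) * hx + (-sx^2) * hy
  have hpq : 0 < sx * sy := mul_pos hsx hsy
  have hb1 : (sx ^ 2 + sy ^ 2 - (sx * cy + cx * sy) ^ 2) < 2 * sx * sy := by
    nlinarith [mul_pos hpq hc1]
  have hb2 : -(2 * sx * sy) < (sx ^ 2 + sy ^ 2 - (sx * cy + cx * sy) ^ 2) := by
    nlinarith [mul_pos hpq hc2]
  have hN : 0 < sy ^ 2 * v₁ ^ 2 + (sx ^ 2 + sy ^ 2 - (sx * cy + cx * sy) ^ 2) * (v₁ * v₂)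
      + sx ^ 2 * v₂ ^ 2 := quad_pos sx sy _ v₁ v₂ hsx hsy hb2 hb1 hv
  have hBC := hBC_lemma sx cx sy cy hx hy hσ0
  calc v₁ * ((v₁ + v₂) * sy ^ 2 / (2 * (sx * cy + cx * sy) ^ 2)
          - ((cx * cy - sx * sy) / (sx * cy + cx * sy)) * sy * cy * v₂
          - v₂ / 4 + v₂ / 2 * (2 * cy ^ 2 - 1))
      + v₂ * ((v₂ + v₁) * sx ^ 2 / (2 * (sx * cy + cx * sy) ^ 2)
          - ((cx * cy - sx * sy) / (sx * cy + cx * sy)) * sx * cx * v₁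
          - v₁ / 4 + v₁ / 2 * (2 * cx ^ 2 - 1))
      = v₁ ^ 2 * (sy ^ 2 / (2 * (sx * cy + cx * sy) ^ 2))
        + v₂ ^ 2 * (sx ^ 2 / (2 * (sx * cy + cx * sy) ^ 2))
        + (v₁ * v₂) * (sy ^ 2 / (2 * (sx * cy + cx * sy) ^ 2)
          - ((cx * cy - sx * sy) / (sx * cy + cx * sy)) * sy * cy - 1 / 4 + (2 * cy ^ 2 - 1) / 2
          + (sx ^ 2 / (2 * (sx * cy + cx * sy) ^ 2)
          - ((cx * cy - sx * sy) / (sx * cy + cx * sy)) * sx * cx - 1 / 4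
          + (2 * cx ^ 2 - 1) / 2)) := by ring
    _ = v₁ ^ 2 * (sy ^ 2 / (2 * (sx * cy + cx * sy) ^ 2))
        + v₂ ^ 2 * (sx ^ 2 / (2 * (sx * cy + cx * sy) ^ 2))
        + (v₁ * v₂) * ((sx ^ 2 + sy ^ 2 - (sx * cy + cx * sy) ^ 2)
            / (2 * (sx * cy + cx * sy) ^ 2)) := by rw [hBC]
    _ = (sy ^ 2 * v₁ ^ 2 + (sx ^ 2 + sy ^ 2 - (sx * cy + cx * sy) ^ 2) * (v₁ * v₂)
        + sx ^ 2 * v₂ ^ 2) / (2 * (sx * cy + cx * sy) ^ 2) := by ring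
    _ > 0 := by positivity

lemma seg_mem {a₁ a₂ b₁ b₂ t : ℝ} (ha₁ : 0 < a₁) (ha₂ : 0 < a₂) (ha₃ : a₁ + a₂ < 1)
    (hb₁ : 0 < b₁) (hb₂ : 0 < b₂) (hb₃ : b₁ + b₂ < 1) (ht0 : 0 ≤ t) (ht1 : t ≤ 1) :
    0 < b₁ + t * (a₁ - b₁) ∧ 0 < b₂ + t * (a₂ - b₂) ∧
      (b₁ + t * (a₁ - b₁)) + (b₂ + t * (a₂ - b₂)) < 1 := by
  rcases eq_or_lt_of_le ht0 with h | h
  · simp only [← h, zero_mul, add_zero]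
    exact ⟨hb₁, hb₂, hb₃⟩
  · refine ⟨?_, ?_, ?_⟩ <;>
      nlinarith [mul_pos h ha₁, mul_pos h ha₂,
        mul_nonneg (sub_nonneg.mpr ht1) hb₁.le, mul_nonneg (sub_nonneg.mpr ht1) hb₂.le,
        mul_pos h (show (0:ℝ) < 1 - a₁ - a₂ by linarith),
        mul_nonneg (sub_nonneg.mpr ht1) (show (0:ℝ) ≤ 1 - b₁ - b₂ by linarith)]

lemma sin_pi_mul_pos {x : ℝ} (h0 : 0 < x) (h1 : x < 1) : 0 < Real.sin (π * x) := by
  apply Real.sin_pos_of_pos_of_lt_pi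
  · positivity
  · nlinarith [Real.pi_pos]

lemma Qpos (ρ₁ ρ₂ v₁ v₂ : ℝ) (h₁ : 0 < ρ₁) (h₂ : 0 < ρ₂) (h₃ : ρ₁ + ρ₂ < 1)
    (hv : v₁ ≠ 0 ∨ v₂ ≠ 0) :
    0 < v₁ * D1 ρ₁ ρ₂ v₁ v₂ + v₂ * D1 ρ₂ ρ₁ v₂ v₁ := by
  have hsx : 0 < Real.sin (π * ρ₁) := sin_pi_mul_pos h₁ (by linarith)
  have hsy : 0 < Real.sin (π * ρ₂) := sin_pi_mul_pos h₂ (by linarith)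
  have hσ1 : 0 < Real.sin (π * (ρ₁ + ρ₂)) := sin_pi_mul_pos (by linarith) h₃
  have e1 : π * (ρ₁ + ρ₂) = π * ρ₁ + π * ρ₂ := by ring
  have e2 : π * (ρ₂ + ρ₁) = π * ρ₂ + π * ρ₁ := by ring
  have hσ : 0 < Real.sin (π * ρ₁) * Real.cos (π * ρ₂) + Real.cos (π * ρ₁) * Real.sin (π * ρ₂) := by
    rw [← Real.sin_add, ← e1]; exact hσ1
  have key := core (Real.sin (π * ρ₁)) (Real.cos (π * ρ₁)) (Real.sin (π * ρ₂)) (Real.cos (π * ρ₂))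
    v₁ v₂ (Real.sin_sq_add_cos_sq _) (Real.sin_sq_add_cos_sq _) hsx hsy hσ hv
  simp only [D1]
  rw [e1, e2, Real.sin_add, Real.sin_add, Real.cos_add, Real.cos_add,
    Real.cos_two_mul, Real.cos_two_mul]
  exact lt_of_lt_of_eq key (by ring)

/-- The Jacobian of `W` is positive definite on the open triangle `T`, and consequently
`(a-b)·(W(a)-W(b)) ≥ 0` for `a, b ∈ T`. -/
theorem HW_posDef_and_monotone :
    (∀ ρ₁ ρ₂ : ℝ, 0 < ρ₁ → 0 < ρ₂ → ρ₁ + ρ₂ < 1 →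
      ∀ v₁ v₂ : ℝ, (v₁, v₂) ≠ ((0 : ℝ), (0 : ℝ)) →
        0 < v₁ * (v₁ * deriv (fun a => W1 a ρ₂) ρ₁ + v₂ * deriv (fun b => W1 ρ₁ b) ρ₂)
          + v₂ * (v₁ * deriv (fun a => W2 a ρ₂) ρ₁ + v₂ * deriv (fun b => W2 ρ₁ b) ρ₂)) ∧
    (∀ a₁ a₂ b₁ b₂ : ℝ, 0 < a₁ → 0 < a₂ → a₁ + a₂ < 1 → 0 < b₁ → 0 < b₂ → b₁ + b₂ < 1 →
      0 ≤ (a₁ - b₁) * (W1 a₁ a₂ - W1 b₁ b₂) + (a₂ - b₂) * (W2 a₁ a₂ - W2 b₁ b₂)) := by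
  constructor
  · intro ρ₁ ρ₂ h₁ h₂ h₃ v₁ v₂ hne
    have hv : v₁ ≠ 0 ∨ v₂ ≠ 0 := by
      by_contra h
      push_neg at h
      exact hne (by simp [h.1, h.2])
    have hs : Real.sin (π * (ρ₁ + ρ₂)) ≠ 0 :=
      ne_of_gt (sin_pi_mul_pos (by linarith) h₃)
    have hs' : Real.sin (π * (ρ₂ + ρ₁)) ≠ 0 := by rwa [add_comm ρ₂ ρ₁]
    have hd1 : deriv (fun a => W1 a ρ₂) ρ₁ = D1 ρ₁ ρ₂ 1 0 := by
      exact (hasDerivAt_W1_comp (fun a => a) (fun _ => ρ₂) 1 0 ρ₁ (hasDerivAt_id ρ₁)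
        (hasDerivAt_const ρ₁ ρ₂) hs).deriv
    have hd2 : deriv (fun b => W1 ρ₁ b) ρ₂ = D1 ρ₁ ρ₂ 0 1 := by
      exact (hasDerivAt_W1_comp (fun _ => ρ₁) (fun b => b) 0 1 ρ₂ (hasDerivAt_const ρ₂ ρ₁)
        (hasDerivAt_id ρ₂) hs).deriv
    have hd3 : deriv (fun a => W2 a ρ₂) ρ₁ = D1 ρ₂ ρ₁ 0 1 := by
      have := (hasDerivAt_W1_comp (fun _ => ρ₂) (fun a => a) 0 1 ρ₁ (hasDerivAt_const ρ₁ ρ₂)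
        (hasDerivAt_id ρ₁) hs').deriv
      simpa [W2] using this
    have hd4 : deriv (fun b => W2 ρ₁ b) ρ₂ = D1 ρ₂ ρ₁ 1 0 := by
      have := (hasDerivAt_W1_comp (fun b => b) (fun _ => ρ₁) 1 0 ρ₂ (hasDerivAt_id ρ₂)
        (hasDerivAt_const ρ₂ ρ₁) hs').deriv
      simpa [W2] using this
    rw [hd1, hd2, hd3, hd4]
    have key := Qpos ρ₁ ρ₂ v₁ v₂ h₁ h₂ h₃ hv
    refine lt_of_lt_of_eq key ?_
    simp only [D1]; ring
  · intro a₁ a₂ b₁ b₂ ha₁ ha₂ ha₃ hb₁ hb₂ hb₃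
    by_cases hab : a₁ = b₁ ∧ a₂ = b₂
    · simp [hab.1, hab.2]
    · have hv : a₁ - b₁ ≠ 0 ∨ a₂ - b₂ ≠ 0 := by
        by_contra h
        push_neg at h
        exact hab ⟨by linarith [sub_eq_zero.mp h.1], by linarith [sub_eq_zero.mp h.2]⟩
      set d₁ := a₁ - b₁ with hd₁
      set d₂ := a₂ - b₂ with hd₂
      set φ : ℝ → ℝ := fun t =>
        d₁ * W1 (b₁ + t * d₁) (b₂ + t * d₂) + d₂ * W1 (b₂ + t * d₂) (b₁ + t * d₁) with hφ
      have hmemT : ∀ t ∈ Set.Icc (0:ℝ) 1,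
          0 < b₁ + t * d₁ ∧ 0 < b₂ + t * d₂ ∧ (b₁ + t * d₁) + (b₂ + t * d₂) < 1 := by
        intro t ht
        obtain ⟨ht0, ht1⟩ := ht
        exact seg_mem ha₁ ha₂ ha₃ hb₁ hb₂ hb₃ ht0 ht1
      have hder : ∀ t ∈ Set.Icc (0:ℝ) 1,
          HasDerivAt φ (d₁ * D1 (b₁ + t * d₁) (b₂ + t * d₂) d₁ d₂
            + d₂ * D1 (b₂ + t * d₂) (b₁ + t * d₁) d₂ d₁) t := by
        intro t ht
        obtain ⟨hp1, hp2, hp3⟩ := hmemT t ht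
        have hc₁ : HasDerivAt (fun s : ℝ => b₁ + s * d₁) d₁ t := by
          simpa using ((hasDerivAt_id t).mul_const d₁).const_add b₁
        have hc₂ : HasDerivAt (fun s : ℝ => b₂ + s * d₂) d₂ t := by
          simpa using ((hasDerivAt_id t).mul_const d₂).const_add b₂
        have hsA : Real.sin (π * ((b₁ + t * d₁) + (b₂ + t * d₂))) ≠ 0 :=
          ne_of_gt (sin_pi_mul_pos (by linarith) hp3)
        have hsB : Real.sin (π * ((b₂ + t * d₂) + (b₁ + t * d₁))) ≠ 0 := by
          rwa [add_comm (b₂ + t * d₂)]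
        have hA := (hasDerivAt_W1_comp (fun s : ℝ => b₁ + s * d₁) (fun s : ℝ => b₂ + s * d₂)
          d₁ d₂ t hc₁ hc₂ hsA).const_mul d₁
        have hB := (hasDerivAt_W1_comp (fun s : ℝ => b₂ + s * d₂) (fun s : ℝ => b₁ + s * d₁)
          d₂ d₁ t hc₂ hc₁ hsB).const_mul d₂
        exact hA.add hB
      have hmono : MonotoneOn φ (Set.Icc (0:ℝ) 1) := by
        apply monotoneOn_of_deriv_nonneg (convex_Icc 0 1)
        · intro t ht
          exact (hder t ht).continuousAt.continuousWithinAt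
        · intro t ht
          rw [interior_Icc] at ht
          exact ((hder t ⟨le_of_lt ht.1, le_of_lt ht.2⟩).differentiableAt).differentiableWithinAt
        · intro t ht
          rw [interior_Icc] at ht
          have ht' : t ∈ Set.Icc (0:ℝ) 1 := ⟨le_of_lt ht.1, le_of_lt ht.2⟩
          rw [(hder t ht').deriv]
          obtain ⟨hp1, hp2, hp3⟩ := hmemT t ht'
          exact le_of_lt (Qpos _ _ _ _ hp1 hp2 hp3 hv)
      have h01 : φ 0 ≤ φ 1 :=
        hmono (Set.mem_Icc.mpr ⟨le_refl 0, zero_le_one⟩)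
          (Set.mem_Icc.mpr ⟨zero_le_one, le_refl 1⟩) zero_le_one
      have hφ0 : φ 0 = d₁ * W1 b₁ b₂ + d₂ * W1 b₂ b₁ := by
        rw [hφ]; norm_num
      have hφ1 : φ 1 = d₁ * W1 a₁ a₂ + d₂ * W1 a₂ a₁ := by
        rw [hφ]
        have e1 : b₁ + 1 * d₁ = a₁ := by rw [hd₁]; ring
        have e2 : b₂ + 1 * d₂ = a₂ := by rw [hd₂]; ring
        simp only [e1, e2]
      simp only [W2]
      calc (0:ℝ) ≤ φ 1 - φ 0 := by linarith
        _ = d₁ * (W1 a₁ a₂ - W1 b₁ b₂) + d₂ * (W1 a₂ a₁ - W1 b₂ b₁) := by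
            rw [hφ0, hφ1]; ring
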